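/- arXiv:2505.02864 — 5 statements merged into one kernel-verified Lean document; each statement's English description precedes it below -/
import Mathlib

section
/- Let N ≥ 1, let a > 0, let p : Fin N → ℝ with p(n) ≥ 0 for all n, let c : Fin N → ℝ with c(n) > 0 for all n, and let σ, τ be permutations of Fin N such that c ∘ τ is antitone. For a permutation ρ define the rate at position n as R_ρ(n) = log₂(1 + a·p(n)/(a·∑_{j>n} p(j) + max_{i≥n} c(ρ(i)))), the maximum taken over positions i with n ≤ i. Then for every position n, R_σ(n) ≤ R_τ(n), and moreover R_τ(n) = log₂(1 + a·p(n)/(a·∑_{j>n} p(j) + c(τ(n)))). -/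
/-- The achievable rate at decoding position `n` under decoding order `ρ`:
`log₂ (1 + a p n / (a ∑_{j>n} p j + max_{i ≥ n} c (ρ i)))`. -/
noncomputable def sicRate {N : ℕ} (a : ℝ) (p c : Fin N → ℝ)
    (ρ : Equiv.Perm (Fin N)) (n : Fin N) : ℝ :=
  Real.logb 2 (1 + a * p n /
    (a * ∑ j ∈ Finset.Ioi n, p j +
      (Finset.Ici n).sup' ⟨n, Finset.mem_Ici.mpr le_rfl⟩ (fun i => c (ρ i))))

/-- Proposition 1: the decoding order `τ` sorted so that `c ∘ τ`
is antitone maximizes the rate at every position, and under `τ` the max term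
reduces to `c (τ n)`. -/
theorem optimal_sic_decoding_order (N : ℕ) (hN : 1 ≤ N) (a : ℝ) (ha : 0 < a)
    (p c : Fin N → ℝ) (hp : ∀ n, 0 ≤ p n) (hc : ∀ n, 0 < c n)
    (σ τ : Equiv.Perm (Fin N)) (hτ : Antitone (c ∘ ⇑τ)) (n : Fin N) :
    sicRate a p c σ n ≤ sicRate a p c τ n ∧
      sicRate a p c τ n =
        Real.logb 2 (1 + a * p n / (a * ∑ j ∈ Finset.Ioi n, p j + c (τ n))) := by
  have hne : (Finset.Ici n).Nonempty := ⟨n, Finset.mem_Ici.mpr le_rfl⟩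
  -- the max under τ is c (τ n)
  have hsupτ : (Finset.Ici n).sup' hne (fun i => c (τ i)) = c (τ n) := by
    apply le_antisymm
    · apply Finset.sup'_le
      intro i hi
      exact hτ (Finset.mem_Ici.mp hi)
    · exact Finset.le_sup' (fun i => c (τ i)) (Finset.mem_Ici.mpr le_rfl)
  -- the max under σ is at least c (τ n)
  have hsupσ : c (τ n) ≤ (Finset.Ici n).sup' hne (fun i => c (σ i)) := by
    -- σ '' Ici n and τ '' Iic n intersect
    have hcard : ((Finset.Ici n).image σ).card + ((Finset.Iic n).image τ).card
        > Fintype.card (Fin N) := by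
      rw [Finset.card_image_of_injective _ σ.injective,
        Finset.card_image_of_injective _ τ.injective,
        Fin.card_Ici, Fin.card_Iic, Fintype.card_fin]
      omega
    have hinter : (((Finset.Ici n).image σ) ∩ ((Finset.Iic n).image τ)).Nonempty := by
      by_contra h
      rw [Finset.not_nonempty_iff_eq_empty, ← Finset.disjoint_iff_inter_eq_empty] at h
      have := Finset.card_union_of_disjoint h
      have h2 := Finset.card_le_univ (((Finset.Ici n).image σ) ∪ ((Finset.Iic n).image τ))
      rw [this] at h2
      omega
    obtain ⟨x, hx⟩ := hinter
    rw [Finset.mem_inter, Finset.mem_image, Finset.mem_image] at hx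
    obtain ⟨⟨i, hi, hix⟩, ⟨m, hm, hmx⟩⟩ := hx
    have : c (τ n) ≤ c (σ i) := by
      rw [hix, ← hmx]
      exact hτ (Finset.mem_Iic.mp hm)
    exact this.trans (Finset.le_sup' (fun i => c (σ i)) hi)
  have hS : 0 ≤ ∑ j ∈ Finset.Ioi n, p j := Finset.sum_nonneg fun j _ => hp j
  have hSa : 0 ≤ a * ∑ j ∈ Finset.Ioi n, p j := mul_nonneg ha.le hS
  have hdenτ : 0 < a * ∑ j ∈ Finset.Ioi n, p j + c (τ n) :=
    add_pos_of_nonneg_of_pos hSa (hc _)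
  have hdenσ : 0 < a * ∑ j ∈ Finset.Ioi n, p j +
      (Finset.Ici n).sup' hne (fun i => c (σ i)) :=
    lt_of_lt_of_le hdenτ (by linarith)
  have hnum : 0 ≤ a * p n := mul_nonneg ha.le (hp n)
  constructor
  · unfold sicRate
    apply Real.logb_le_logb_of_le one_lt_two (by nlinarith [div_nonneg hnum hdenσ.le])
    have : a * p n / (a * ∑ j ∈ Finset.Ioi n, p j +
          (Finset.Ici n).sup' hne (fun i => c (σ i))) ≤
        a * p n / (a * ∑ j ∈ Finset.Ioi n, p j +
          (Finset.Ici n).sup' hne (fun i => c (τ i))) := by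
      rw [hsupτ]
      exact div_le_div_of_nonneg_left hnum hdenτ (by linarith)
    linarith
  · unfold sicRate
    rw [hsupτ]
end

section
/- Let N ≥ 1, let a > 0, let p : Fin N → ℝ with p(n) ≥ 0 for all n, let c : Fin N → ℝ with c(n) > 0 for all n, and let σ, τ be permutations of Fin N such that c ∘ τ is antitone. For a permutation ρ define R_ρ(n) = log₂(1 + a·p(n)/(a·∑_{j>n} p(j) + max_{i≥n} c(ρ(i)))). Then the sum rate satisfies ∑_{n} R_σ(n) ≤ ∑_{n} R_τ(n). -/
lemma exists_big {N : ℕ} (c : Fin N → ℝ) (σ τ : Equiv.Perm (Fin N))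
    (hτ : Antitone (c ∘ ⇑τ)) (n : Fin N) :
    ∃ i ∈ Finset.Ici n, c (τ n) ≤ c (σ i) := by
  classical
  set A := (Finset.Iic n).image τ
  set B := (Finset.Ici n).image σ
  have hcard : (A ∩ B).card + (A ∪ B).card = A.card + B.card :=
    Finset.card_inter_add_card_union A B
  have hA : A.card = (n : ℕ) + 1 := by
    rw [Finset.card_image_of_injective _ τ.injective, Fin.card_Iic]
  have hB : B.card = N - (n : ℕ) := by
    rw [Finset.card_image_of_injective _ σ.injective, Fin.card_Ici]
  have hnlt : (n : ℕ) < N := n.isLt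
  have hne : (A ∩ B).Nonempty := by
    rw [← Finset.card_pos]
    have hle : (A ∪ B).card ≤ N := by
      simpa using Finset.card_le_card (Finset.subset_univ (A ∪ B))
    omega
  obtain ⟨j, hj⟩ := hne
  rw [Finset.mem_inter] at hj
  obtain ⟨i₁, hi₁, hji₁⟩ := Finset.mem_image.mp hj.1
  obtain ⟨i₂, hi₂, hji₂⟩ := Finset.mem_image.mp hj.2
  refine ⟨i₂, hi₂, ?_⟩
  rw [hji₂, ← hji₁]
  exact hτ (Finset.mem_Iic.mp hi₁)

/-- sum-rate form of Proposition 1: the decoding order sorted by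
decreasing `c` maximizes the sum rate. -/
theorem optimal_sic_decoding_order_sum_rate (N : ℕ) (hN : 1 ≤ N) (a : ℝ)
    (ha : 0 < a) (p c : Fin N → ℝ) (hp : ∀ n, 0 ≤ p n) (hc : ∀ n, 0 < c n)
    (σ τ : Equiv.Perm (Fin N)) (hτ : Antitone (c ∘ ⇑τ)) :
    ∑ n, sicRate a p c σ n ≤ ∑ n, sicRate a p c τ n := by
  apply Finset.sum_le_sum
  intro n _
  unfold sicRate
  have hne : (Finset.Ici n).Nonempty := ⟨n, Finset.mem_Ici.mpr le_rfl⟩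
  set Mσ := (Finset.Ici n).sup' ⟨n, Finset.mem_Ici.mpr le_rfl⟩ (fun i => c (σ i)) with hMσdef
  set Mτ := (Finset.Ici n).sup' ⟨n, Finset.mem_Ici.mpr le_rfl⟩ (fun i => c (τ i)) with hMτdef
  have hMτ : Mτ = c (τ n) := by
    apply le_antisymm
    · exact Finset.sup'_le _ _ fun i hi => hτ (Finset.mem_Ici.mp hi)
    · exact Finset.le_sup' (fun i => c (τ i)) (Finset.mem_Ici.mpr (le_refl n))
  have hMστ : Mτ ≤ Mσ := by
    rw [hMτ]
    obtain ⟨i, hi, hle⟩ := exists_big c σ τ hτ n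
    exact hle.trans (Finset.le_sup' (fun i => c (σ i)) hi)
  have hMτpos : 0 < Mτ := by rw [hMτ]; exact hc _
  have hS : 0 ≤ a * ∑ j ∈ Finset.Ioi n, p j :=
    mul_nonneg ha.le (Finset.sum_nonneg fun j _ => hp j)
  have hDτ : 0 < a * ∑ j ∈ Finset.Ioi n, p j + Mτ := by linarith
  have hDσ : 0 < a * ∑ j ∈ Finset.Ioi n, p j + Mσ := by linarith
  have hfrac : a * p n / (a * ∑ j ∈ Finset.Ioi n, p j + Mσ) ≤
      a * p n / (a * ∑ j ∈ Finset.Ioi n, p j + Mτ) :=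
    div_le_div_of_nonneg_left (mul_nonneg ha.le (hp n)) hDτ (by linarith)
  have hposσ : 0 ≤ a * p n / (a * ∑ j ∈ Finset.Ioi n, p j + Mσ) :=
    div_nonneg (mul_nonneg ha.le (hp n)) hDσ.le
  exact Real.logb_le_logb_of_le one_lt_two (by linarith) (by linarith)
end

section
/- Let N ≥ 1, let a > 0, and let c : Fin N → ℝ be antitone with c(n) > 0 for all n. Define f(p) = ∑_{n} log₂(1 + a·p(n)/(a·∑_{j>n} p(j) + c(n))) for p : Fin N → ℝ. Then f is strictly monotone on the nonnegative orthant: if 0 ≤ p(n) ≤ q(n) for all n and p ≠ q, then f(p) < f(q). -/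
open Finset Real

/-- The increment `logb 2 (x + d) - logb 2 x` is antitone in `x` for `d ≥ 0`. -/
private lemma logb_diff_anti {x x' d : ℝ} (hx : 0 < x) (hxx : x ≤ x') (hd : 0 ≤ d) :
    Real.logb 2 (x' + d) - Real.logb 2 x' ≤ Real.logb 2 (x + d) - Real.logb 2 x := by
  have hx' : 0 < x' := lt_of_lt_of_le hx hxx
  have h1 : (x' + d) * x ≤ (x + d) * x' := by nlinarith
  have h2 : Real.logb 2 ((x' + d) * x) ≤ Real.logb 2 ((x + d) * x') :=
    Real.logb_le_logb_of_le one_lt_two (by positivity) h1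
  rw [Real.logb_mul (by positivity) (by positivity),
    Real.logb_mul (by positivity) (by positivity)] at h2
  linarith

/-- the sum rate is strictly increasing in the power allocation
coefficients on the nonnegative orthant. -/
theorem sum_rate_strictMono (N : ℕ) (hN : 1 ≤ N) (a : ℝ) (ha : 0 < a)
    (c : Fin N → ℝ) (hc_anti : Antitone c) (hc : ∀ n, 0 < c n)
    (p q : Fin N → ℝ) (hp : ∀ n, 0 ≤ p n) (hpq : ∀ n, p n ≤ q n) (hne : p ≠ q) :
    (∑ n, Real.logb 2 (1 + a * p n / (a * ∑ j ∈ Finset.Ioi n, p j + c n))) <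
      ∑ n, Real.logb 2 (1 + a * q n / (a * ∑ j ∈ Finset.Ioi n, q j + c n)) := by
  obtain ⟨M, rfl⟩ : ∃ M, N = M + 1 := ⟨N - 1, (Nat.succ_pred_eq_of_pos hN).symm⟩
  -- ℕ-indexed versions of the data
  set P : ℕ → ℝ := fun k => if h : k < M + 1 then p ⟨k, h⟩ else 0 with hP
  set Q : ℕ → ℝ := fun k => if h : k < M + 1 then q ⟨k, h⟩ else 0 with hQ
  set C : ℕ → ℝ := fun k => if h : k < M + 1 then c ⟨k, h⟩ else 1 with hC
  have hP0 : ∀ k, 0 ≤ P k := by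
    intro k; by_cases h : k < M + 1 <;> simp [hP, h, hp, -Order.lt_add_one_iff]
  have hQ0 : ∀ k, 0 ≤ Q k := by
    intro k; by_cases h : k < M + 1 <;> simp [hQ, h, -Order.lt_add_one_iff]
    exact le_trans (hp _) (hpq _)
  have hPQ : ∀ k, P k ≤ Q k := by
    intro k; by_cases h : k < M + 1 <;> simp [hP, hQ, h, hpq, -Order.lt_add_one_iff]
  have hC0 : ∀ k, 0 < C k := by
    intro k; by_cases h : k < M + 1 <;> simp [hC, h, hc, -Order.lt_add_one_iff]
  set Sp : ℕ → ℝ := fun k => ∑ j ∈ Finset.Ico k (M + 1), P j with hSp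
  set Sq : ℕ → ℝ := fun k => ∑ j ∈ Finset.Ico k (M + 1), Q j with hSq
  have hSp0 : ∀ k, 0 ≤ Sp k := fun k => Finset.sum_nonneg fun j _ => hP0 j
  have hSq0 : ∀ k, 0 ≤ Sq k := fun k => Finset.sum_nonneg fun j _ => hQ0 j
  have hSpq : ∀ k, Sp k ≤ Sq k := fun k => Finset.sum_le_sum fun j _ => hPQ j
  -- rewrite each side as a sum of differences of logs
  have key : ∀ (r : Fin (M + 1) → ℝ) (R SR : ℕ → ℝ), (∀ k, 0 ≤ R k) →
      (∀ k (h : k < M + 1), R k = r ⟨k, h⟩) →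
      (SR = fun k => ∑ j ∈ Finset.Ico k (M + 1), R j) →
      (∑ n, Real.logb 2 (1 + a * r n / (a * ∑ j ∈ Finset.Ioi n, r j + c n)))
        = ∑ k ∈ Finset.range (M + 1), (Real.logb 2 (a * SR k + C k)
            - Real.logb 2 (a * SR (k + 1) + C k)) := by
    intro r R SR hR0 hRr hSR
    rw [← Fin.sum_univ_eq_sum_range]
    apply Finset.sum_congr rfl
    intro n _
    have hIoi : ∑ j ∈ Finset.Ioi n, r j = SR ((n : ℕ) + 1) := by
      have hmap : (Finset.Ioi n).map Fin.valEmbedding = Finset.Ioc (n : ℕ) M :=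
        (Fin.map_valEmbedding_Ioi n).trans (Finset.Ioo_add_one_right_eq_Ioc _ _)
      have h1 : ∑ j ∈ Finset.Ioi n, r j = ∑ k ∈ Finset.Ioc (n : ℕ) M, R k := by
        rw [← hmap, Finset.sum_map]
        apply Finset.sum_congr rfl
        intro j _
        simp [Fin.valEmbedding, hRr j j.isLt]
      rw [h1, hSR]
      simp only
      rw [Finset.Ico_add_one_add_one_eq_Ioc]
    have hCn : C (n : ℕ) = c n := by simp [hC, n.isLt, -Order.lt_add_one_iff]
    have hSn : SR (n : ℕ) = R (n : ℕ) + SR ((n : ℕ) + 1) := by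
      rw [hSR]
      exact Finset.sum_eq_sum_Ico_succ_bot n.isLt R
    have hSR10 : 0 ≤ SR ((n : ℕ) + 1) := by
      rw [hSR]; exact Finset.sum_nonneg fun j _ => hR0 j
    have hcn := hc n
    have ht : 0 < a * SR ((n : ℕ) + 1) + c n := by positivity
    have hRn0 : 0 ≤ R (n : ℕ) := hR0 _
    have hpos : 0 < a * SR (n : ℕ) + c n := by
      rw [hSn]; nlinarith
    have hrn : r n = R (n : ℕ) := (hRr (n : ℕ) n.isLt).symm
    rw [hIoi, hCn, hrn]
    have h1 : 1 + a * R (n : ℕ) / (a * SR ((n : ℕ) + 1) + c n)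
        = (a * SR (n : ℕ) + c n) / (a * SR ((n : ℕ) + 1) + c n) := by
      rw [hSn]
      field_simp
      ring
    rw [h1, Real.logb_div hpos.ne' ht.ne']
  rw [key p P Sp hP0 (fun k h => by simp [hP, h, -Order.lt_add_one_iff]) hSp,
    key q Q Sq hQ0 (fun k h => by simp [hQ, h, -Order.lt_add_one_iff]) hSq]
  -- notation for the per-index differences
  set D : ℕ → ℝ := fun k => Real.logb 2 (a * Sq k + C k) - Real.logb 2 (a * Sp k + C k)
    with hD
  set E : ℕ → ℝ := fun k => Real.logb 2 (a * Sq (k + 1) + C k)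
    - Real.logb 2 (a * Sp (k + 1) + C k) with hE
  have hgoal : (0 : ℝ) < ∑ k ∈ Finset.range (M + 1), (D k - E k) → _ := id
  -- reduce goal to positivity of ∑ (D - E)
  have hsum : ∑ k ∈ Finset.range (M + 1), (Real.logb 2 (a * Sq k + C k)
        - Real.logb 2 (a * Sq (k + 1) + C k))
      - ∑ k ∈ Finset.range (M + 1), (Real.logb 2 (a * Sp k + C k)
        - Real.logb 2 (a * Sp (k + 1) + C k))
      = ∑ k ∈ Finset.range (M + 1), (D k - E k) := by
    rw [← Finset.sum_sub_distrib]
    apply Finset.sum_congr rfl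
    intro k _
    simp only [hD, hE]
    ring
  rw [← sub_pos, hsum]
  -- key comparison: E k ≤ D (k + 1) for k < M
  have hED : ∀ k < M, E k ≤ D (k + 1) := by
    intro k hk
    have hk1 : k + 1 < M + 1 := by omega
    have hfin : (⟨k + 1, hk1⟩ : Fin (M + 1)) ≤ ⟨k, by omega⟩ → True := fun _ => trivial
    have hCle : C (k + 1) ≤ C k := by
      have h1 : k < M + 1 := by omega
      simp only [hC, dif_pos hk1, dif_pos h1]
      exact hc_anti (by simp [Fin.le_def])
    have hx : 0 < a * Sp (k + 1) + C (k + 1) := by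
      have := hC0 (k + 1); have := hSp0 (k + 1); positivity
    have hxx : a * Sp (k + 1) + C (k + 1) ≤ a * Sp (k + 1) + C k := by linarith
    have hd : 0 ≤ a * (Sq (k + 1) - Sp (k + 1)) := by
      have := hSpq (k + 1); nlinarith
    have := logb_diff_anti hx hxx hd
    simp only [hD, hE]
    have e1 : a * Sp (k + 1) + C (k + 1) + a * (Sq (k + 1) - Sp (k + 1))
        = a * Sq (k + 1) + C (k + 1) := by ring
    have e2 : a * Sp (k + 1) + C k + a * (Sq (k + 1) - Sp (k + 1))
        = a * Sq (k + 1) + C k := by ring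
    rw [e1, e2] at this
    linarith
  -- the last E vanishes
  have hEM : E M = 0 := by
    have h0 : Sp (M + 1) = 0 := by simp [hSp]
    have h1 : Sq (M + 1) = 0 := by simp [hSq]
    simp [hE, h0, h1]
  -- D 0 is strictly positive
  have hD0 : 0 < D 0 := by
    have hlt : Sp 0 < Sq 0 := by
      apply Finset.sum_lt_sum (fun j _ => hPQ j)
      have hex : ∃ n, p n < q n := by
        by_contra hcon
        push_neg at hcon
        exact hne (funext fun n => le_antisymm (hpq n) (hcon n))
      obtain ⟨n, hn⟩ := hex
      refine ⟨(n : ℕ), by simp [Nat.lt_succ_iff, Nat.le_of_lt_succ n.isLt], ?_⟩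
      simp [hP, hQ, n.isLt, hn, -Order.lt_add_one_iff]
    have h1 : 0 < a * Sp 0 + C 0 := by have := hC0 0; have := hSp0 0; positivity
    simp only [hD, sub_pos]
    apply Real.logb_lt_logb one_lt_two h1
    nlinarith
  -- put everything together
  have hEsum : ∑ k ∈ Finset.range (M + 1), E k
      ≤ ∑ k ∈ Finset.range (M + 1), D k - D 0 := by
    rw [Finset.sum_range_succ, Finset.sum_range_succ' D, hEM, add_zero]
    have : ∑ k ∈ Finset.range M, E k ≤ ∑ k ∈ Finset.range M, D (k + 1) :=
      Finset.sum_le_sum fun k hk => hED k (Finset.mem_range.mp hk)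
    linarith
  rw [Finset.sum_sub_distrib]
  linarith
end

section
/- Let N ≥ 1, let a > 0, and let c : Fin N → ℝ be antitone with c(n) > 0 for all n. Define f(p) = ∑_{n} log₂(1 + a·p(n)/(a·∑_{j>n} p(j) + c(n))) and the feasible set S = {p : Fin N → ℝ | (∀ n, 0 ≤ p(n)) ∧ ∑_n p(n) ≤ 1}. If p* ∈ S satisfies f(p) ≤ f(p*) for all p ∈ S, then ∑_n p*(n) = 1. -/
/-- at any maximizer of the sum rate over the simplex-constrained
feasible set, the total-power constraint is tight. -/
theorem power_constraint_tight_at_optimum (N : ℕ) (hN : 1 ≤ N) (a : ℝ)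
    (ha : 0 < a) (c : Fin N → ℝ) (hc_anti : Antitone c) (hc : ∀ n, 0 < c n)
    (pstar : Fin N → ℝ)
    (hstar : (∀ n, 0 ≤ pstar n) ∧ ∑ n, pstar n ≤ 1)
    (hopt : ∀ p : Fin N → ℝ, ((∀ n, 0 ≤ p n) ∧ ∑ n, p n ≤ 1) →
      (∑ n, Real.logb 2 (1 + a * p n / (a * ∑ j ∈ Finset.Ioi n, p j + c n))) ≤
        ∑ n, Real.logb 2
          (1 + a * pstar n / (a * ∑ j ∈ Finset.Ioi n, pstar j + c n))) :
    ∑ n, pstar n = 1 := by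
  by_contra hne
  have hlt : ∑ n, pstar n < 1 := lt_of_le_of_ne hstar.2 hne
  set ε : ℝ := 1 - ∑ n, pstar n with hε
  have hεpos : 0 < ε := by simp only [hε]; linarith
  have hNpos : 0 < N := hN
  let i0 : Fin N := ⟨0, hNpos⟩
  set p : Fin N → ℝ := fun n => pstar n + (if n = i0 then ε else 0) with hp
  have hpi0 : p i0 = pstar i0 + ε := by simp [hp]
  have hpn : ∀ n : Fin N, n ≠ i0 → p n = pstar n := by
    intro n h; simp [hp, h]
  have hi0le : ∀ n : Fin N, i0 ≤ n := fun n => Fin.mk_le_of_le_val (Nat.zero_le _)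
  have hsum_eq : ∀ n : Fin N, ∑ j ∈ Finset.Ioi n, p j = ∑ j ∈ Finset.Ioi n, pstar j := by
    intro n
    refine Finset.sum_congr rfl ?_
    intro j hj
    have hnj : n < j := Finset.mem_Ioi.mp hj
    have hji0 : j ≠ i0 := by
      intro h; rw [h] at hnj; exact absurd (hi0le n) (not_le_of_gt hnj)
    simp [hp, hji0]
  have hfeas : (∀ n, 0 ≤ p n) ∧ ∑ n, p n ≤ 1 := by
    constructor
    · intro n
      by_cases h : n = i0
      · subst h
        rw [hpi0]
        have := hstar.1 i0
        linarith
      · rw [hpn n h]; exact hstar.1 n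
    · have : ∑ n, p n = (∑ n, pstar n) + ε := by
        simp [hp, Finset.sum_add_distrib]
      rw [this]; linarith
  have key := hopt p hfeas
  have hstrict : ∑ n, Real.logb 2 (1 + a * pstar n / (a * ∑ j ∈ Finset.Ioi n, pstar j + c n)) <
      ∑ n, Real.logb 2 (1 + a * p n / (a * ∑ j ∈ Finset.Ioi n, p j + c n)) := by
    apply Finset.sum_lt_sum
    · intro n _
      rw [hsum_eq n]
      by_cases h : n = i0
      · have hden : 0 < a * ∑ j ∈ Finset.Ioi n, pstar j + c n := by
          have hs : 0 ≤ ∑ j ∈ Finset.Ioi n, pstar j :=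
            Finset.sum_nonneg fun j _ => hstar.1 j
          nlinarith [hc n]
        have hple : pstar n ≤ p n := by
          subst h; rw [hpi0]; linarith
        apply Real.logb_le_logb_of_le one_lt_two
        · have h0 : 0 ≤ a * pstar n / (a * ∑ j ∈ Finset.Ioi n, pstar j + c n) :=
            div_nonneg (mul_nonneg ha.le (hstar.1 n)) hden.le
          linarith
        · gcongr
      · simp [hp, h]
    · refine ⟨i0, Finset.mem_univ _, ?_⟩
      rw [hsum_eq i0]
      have hden : 0 < a * ∑ j ∈ Finset.Ioi i0, pstar j + c i0 := by
        have hs : 0 ≤ ∑ j ∈ Finset.Ioi i0, pstar j :=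
          Finset.sum_nonneg fun j _ => hstar.1 j
        nlinarith [hc i0]
      have hpi0 : p i0 = pstar i0 + ε := by simp [hp]
      have hnum : a * pstar i0 < a * p i0 := by
        rw [hpi0]; nlinarith
      have harg : 1 + a * pstar i0 / (a * ∑ j ∈ Finset.Ioi i0, pstar j + c i0) <
          1 + a * p i0 / (a * ∑ j ∈ Finset.Ioi i0, pstar j + c i0) := by
        have := (div_lt_div_iff_of_pos_right hden).mpr hnum
        linarith
      apply Real.logb_lt_logb one_lt_two _ harg
      have h0 : 0 ≤ a * pstar i0 / (a * ∑ j ∈ Finset.Ioi i0, pstar j + c i0) :=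
        div_nonneg (mul_nonneg ha.le (hstar.1 i0)) hden.le
      linarith
  linarith
end

section
/- Let N ≥ 1 and let v : Fin N → ℝ satisfy v(i) > 0 for all i and ∑_i v(i) ≥ 1, and set z = (∑_i v(i))⁻¹ • v. Then for every x : Fin N → ℝ with 0 ≤ x(i) ≤ v(i) for all i and ∑_i x(i) ≤ 1, there exists an index i such that x(j) ≤ (Function.update v i (z i))(j) for all j. -/
/-- after projecting the vertex `v` onto the boundary point
`z = (∑ i, v i)⁻¹ • v`, every feasible point in the box `[0, v]` lies in one of
the new boxes `[0, Function.update v i (z i)]`. -/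
theorem new_polyblock_contains_feasible_set (N : ℕ) (hN : 1 ≤ N)
    (v : Fin N → ℝ) (hv : ∀ i, 0 < v i) (hsum : 1 ≤ ∑ i, v i)
    (x : Fin N → ℝ) (hx : ∀ i, 0 ≤ x i ∧ x i ≤ v i) (hxsum : ∑ i, x i ≤ 1) :
    ∃ i, ∀ j, x j ≤ Function.update v i ((((∑ i, v i)⁻¹ • v)) i) j := by
  set S := ∑ i, v i with hS
  have hSpos : 0 < S := lt_of_lt_of_le one_pos hsum
  by_contra h
  push_neg at h
  have hall : ∀ i, S⁻¹ * v i < x i := by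
    intro i
    obtain ⟨j, hj⟩ := h i
    by_cases hji : j = i
    · subst hji
      simpa [Function.update_self, Pi.smul_apply, smul_eq_mul] using hj
    · exact absurd (by simpa [Function.update_of_ne hji] using hj)
        (not_lt.mpr (hx j).2)
  have hne : (Finset.univ : Finset (Fin N)).Nonempty := by
    simpa [Finset.univ_nonempty_iff] using Fin.pos_iff_nonempty.mp hN
  have hlt : ∑ i, S⁻¹ * v i < ∑ i, x i :=
    Finset.sum_lt_sum_of_nonempty hne fun i _ => hall i
  rw [← Finset.mul_sum, ← hS, inv_mul_cancel₀ hSpos.ne'] at hlt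
  exact absurd hxsum (not_le.mpr hlt)
end
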